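/- arXiv:2404.00527 — 8 statements merged into one kernel-verified Lean document; each statement's English description precedes it below -/
import Mathlib

section
/- For all integers m, n ≥ 0 and real (or formal) variables x_{r,j} for r ∈ [1,n], j ∈ [1,m], the sum over all nondecreasing sequences 0 ≤ i_1 ≤ ... ≤ i_m ≤ n of the product over j = 1..m of (1 - 1[i_{j+1} > i_j] · x_{i_j+1, j}) · (∏_{r=1}^{i_j} x_{r,j}) equals 1, where by convention i_{m+1} = n. -/
private lemma tele_aux {R : Type*} [CommRing R] (y : ℕ → R) (n : ℕ) :
    ∑ k ∈ Finset.range (n+1),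
      (1 - if k < n then y (k+1) else 0) * ∏ r ∈ Finset.Icc 1 k, y r = 1 := by
  induction n with
  | zero => simp
  | succ n ih =>
    rw [Finset.sum_range_succ] at ih
    rw [Finset.sum_range_succ, Finset.sum_range_succ]
    have h1 : ∀ k ∈ Finset.range n,
        (1 - if k < n + 1 then y (k+1) else 0) * ∏ r ∈ Finset.Icc 1 k, y r
        = (1 - if k < n then y (k+1) else 0) * ∏ r ∈ Finset.Icc 1 k, y r := by
      intro k hk
      simp only [Finset.mem_range] at hk
      rw [if_pos hk, if_pos (by omega)]
    rw [Finset.sum_congr rfl h1]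
    rw [if_pos (by omega), if_neg (by omega)]
    rw [if_neg (by omega)] at ih
    rw [Finset.prod_Icc_succ_top (by omega : 1 ≤ n + 1)]
    linear_combination ih

/-- For all m, n ≥ 0 and variables x_{r,j} in a commutative ring, the sum over
all nondecreasing sequences 0 ≤ i_1 ≤ ... ≤ i_m ≤ n of
∏_{j=1}^m (1 - 1[i_{j+1} > i_j]·x_{i_j+1, j})·(∏_{r=1}^{i_j} x_{r,j}) equals 1,
with the convention i_{m+1} = n. -/
theorem nested_geometric_identity {R : Type*} [CommRing R] (m n : ℕ) (x : ℕ → ℕ → R) :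
    ∑ i ∈ Finset.filter (fun i : Fin m → Fin (n + 1) => Monotone i) Finset.univ,
      ∏ j : Fin m,
        ((1 - (if (i j : ℕ) < (if h : (j : ℕ) + 1 < m then ((i ⟨(j : ℕ) + 1, h⟩ : Fin (n + 1)) : ℕ) else n)
                then x ((i j : ℕ) + 1) ((j : ℕ) + 1) else 0))
          * ∏ r ∈ Finset.Icc 1 (i j : ℕ), x r ((j : ℕ) + 1)) = 1 := by
  induction m generalizing n with
  | zero =>
    have h : Finset.filter (fun i : Fin 0 → Fin (n+1) => Monotone i) Finset.univ
        = Finset.univ := Finset.filter_true_of_mem (fun i _ => (fun a => a.elim0 : Monotone i))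
    rw [h]
    simp
  | succ m ih =>
    classical
    set F : (Fin (m+1) → Fin (n+1)) → R := fun i =>
      ∏ j : Fin (m+1),
        ((1 - (if (i j : ℕ) < (if h : (j : ℕ) + 1 < m + 1 then ((i ⟨(j : ℕ) + 1, h⟩ : Fin (n + 1)) : ℕ) else n)
                then x ((i j : ℕ) + 1) ((j : ℕ) + 1) else 0))
          * ∏ r ∈ Finset.Icc 1 (i j : ℕ), x r ((j : ℕ) + 1)) with hF
    rw [← Finset.sum_fiberwise _ (fun i => i (Fin.last m)) F]
    have key : ∀ k : Fin (n+1),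
        ∑ i ∈ Finset.filter (fun i : Fin (m+1) → Fin (n+1) => Monotone i) Finset.univ
            |>.filter (fun i => i (Fin.last m) = k), F i
        = (1 - if (k : ℕ) < n then x ((k : ℕ)+1) (m+1) else 0)
            * ∏ r ∈ Finset.Icc 1 (k : ℕ), x r (m+1) := by
      intro k
      have hcast : (k : ℕ) + 1 ≤ n + 1 := k.isLt
      rw [Finset.sum_bij' (i := fun (i : Fin (m+1) → Fin (n+1)) hi =>
            (fun j : Fin m => (⟨(i (Fin.castSucc j) : ℕ), by
              simp only [Finset.mem_filter, Finset.mem_univ, true_and] at hi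
              have := hi.1 (Fin.le_last (Fin.castSucc j))
              rw [hi.2] at this
              exact Nat.lt_succ_of_le this⟩ : Fin ((k : ℕ) + 1))))
          (j := fun (i' : Fin m → Fin ((k:ℕ)+1)) _ =>
            Fin.snoc (fun j => Fin.castLE hcast (i' j)) k)
          (t := Finset.filter (fun i' : Fin m → Fin ((k:ℕ)+1) => Monotone i') Finset.univ)
          (g := fun i' : Fin m → Fin ((k:ℕ)+1) =>
            (∏ j : Fin m,
              ((1 - (if (i' j : ℕ) < (if h : (j : ℕ) + 1 < m then ((i' ⟨(j : ℕ) + 1, h⟩ : Fin ((k:ℕ) + 1)) : ℕ) else (k:ℕ))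
                      then x ((i' j : ℕ) + 1) ((j : ℕ) + 1) else 0))
                * ∏ r ∈ Finset.Icc 1 (i' j : ℕ), x r ((j : ℕ) + 1)))
              * ((1 - if (k : ℕ) < n then x ((k : ℕ)+1) (m+1) else 0)
                * ∏ r ∈ Finset.Icc 1 (k : ℕ), x r (m+1)))
          ?_ ?_ ?_ ?_ ?_]
      · rw [← Finset.sum_mul]
        rw [ih (k : ℕ)]
        rw [one_mul]
      · -- forward map lands in target: monotone
        intro i hi
        simp only [Finset.mem_filter, Finset.mem_univ, true_and] at hi ⊢
        intro a b hab
        exact hi.1 (Fin.castSucc_le_castSucc_iff.mpr hab)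
      · -- backward map lands in source
        intro i' hi'
        simp only [Finset.mem_filter, Finset.mem_univ, true_and] at hi' ⊢
        constructor
        · rw [Fin.monotone_iff_le_succ]
          intro j
          rw [Fin.snoc_castSucc]
          by_cases h : (j : ℕ) + 1 < m
          · have : j.succ = Fin.castSucc ⟨(j : ℕ) + 1, h⟩ := by
              apply Fin.ext; simp
            rw [this, Fin.snoc_castSucc]
            have : i' j ≤ i' ⟨(j : ℕ) + 1, h⟩ := hi' (by rw [Fin.le_def]; simp)
            rw [Fin.le_def] at this ⊢
            simpa using this
          · have : j.succ = Fin.last m := by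
              apply Fin.ext; simp; omega
            rw [this, Fin.snoc_last]
            rw [Fin.le_def]
            simpa using Nat.lt_succ_iff.mp (i' j).isLt
        · exact Fin.snoc_last _ _
      · -- left inverse
        intro i hi
        simp only [Finset.mem_filter, Finset.mem_univ, true_and] at hi
        funext j
        refine Fin.lastCases ?_ (fun j => ?_) j
        · simp only [Fin.snoc_last]
          exact hi.2.symm
        · simp only [Fin.snoc_castSucc]
          apply Fin.ext
          simp
      · -- right inverse
        intro i' hi'
        funext j
        apply Fin.ext
        simp only [Fin.snoc_castSucc]
        rfl
      · -- values agree
        intro i hi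
        simp only [Finset.mem_filter, Finset.mem_univ, true_and] at hi
        rw [hF]
        beta_reduce
        rw [Fin.prod_univ_castSucc]
        congr 1
        · apply Finset.prod_congr rfl
          intro j _
          have hval : ((Fin.castSucc j : Fin (m+1)) : ℕ) = (j : ℕ) := rfl
          rw [hval]
          have hlt : (j : ℕ) + 1 < m + 1 := by omega
          rw [dif_pos hlt]
          congr 1
          congr 1
          congr 1
          by_cases h : (j : ℕ) + 1 < m
          · rw [dif_pos h]
            rfl
          · rw [dif_neg h]
            have hj1 : (⟨(j : ℕ) + 1, hlt⟩ : Fin (m+1)) = Fin.last m := by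
              apply Fin.ext; simp; omega
            rw [hj1, congrArg Fin.val hi.2]
        · have hval : ((Fin.last m : Fin (m+1)) : ℕ) = m := rfl
          rw [hval, dif_neg (by omega), hi.2]
    rw [Finset.sum_congr rfl (fun k _ => key k)]
    rw [Fin.sum_univ_eq_sum_range
      (fun k => (1 - if k < n then x (k+1) (m+1) else 0) * ∏ r ∈ Finset.Icc 1 k, x r (m+1))]
    exact tele_aux (fun r => x r (m+1)) n
end

section
/- For any f ≥ 1, consider the two random variables X_1 = 1 deterministically and X_2 = (1+f) with probability 1/(1+f) and 0 otherwise. Then E[max{X_1, X_2}] = (2f+1)/(f+1), and every online stopping policy with buyback cost f (which may accept X_1, and upon seeing X_2 may pay f·X_1 to swap to X_2) achieves expected net reward at most 1. Consequently no online policy achieves competitive ratio better than (1+f)/(1+2f) on this instance. -/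
/-- For f ≥ 1, the instance X₁ = 1 (deterministic) and
X₂ = (1+f)·Ber(1/(1+f)) satisfies E[max{X₁,X₂}] = (2f+1)/(f+1); every online policy
(parameterized by the probability q₁ of accepting X₁, the probability q₂ of swapping to
X₂ = 1+f while holding X₁ — paying buyback cost f·1 — and the probability q₃ of accepting
X₂ = 1+f when holding nothing) gets expected net reward at most 1; consequently no online
policy beats competitive ratio (1+f)/(1+2f) on this instance. -/
theorem two_variable_hard_instance (f : ℝ) (hf : 1 ≤ f)
    (q₁ q₂ q₃ : ℝ) (h₁ : q₁ ∈ Set.Icc (0 : ℝ) 1) (h₂ : q₂ ∈ Set.Icc (0 : ℝ) 1)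
    (h₃ : q₃ ∈ Set.Icc (0 : ℝ) 1) :
    let p : ℝ := 1 / (1 + f)            -- probability that X₂ = 1 + f
    let Emax : ℝ := p * (1 + f) + (1 - p) * 1
    let reward : ℝ :=
      q₁ * (p * (q₂ * ((1 + f) - f * 1) + (1 - q₂) * 1) + (1 - p) * 1)
        + (1 - q₁) * (p * (q₃ * (1 + f)))
    Emax = (2 * f + 1) / (f + 1) ∧ reward ≤ 1 ∧ reward ≤ ((1 + f) / (1 + 2 * f)) * Emax := by
  intro p Emax reward
  obtain ⟨hq₁0, hq₁1⟩ := h₁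
  obtain ⟨hq₃0, hq₃1⟩ := h₃
  have hfpos : (0:ℝ) < 1 + f := by linarith
  have hne : (1:ℝ) + f ≠ 0 := ne_of_gt hfpos
  have hEmax : Emax = (2 * f + 1) / (f + 1) := by
    show (1/(1+f)) * (1 + f) + (1 - 1/(1+f)) * 1 = (2 * f + 1) / (f + 1)
    field_simp
    try ring
  have hr : reward = q₁ + (1 - q₁) * q₃ := by
    show q₁ * ((1/(1+f)) * (q₂ * ((1 + f) - f * 1) + (1 - q₂) * 1) + (1 - 1/(1+f)) * 1)
        + (1 - q₁) * ((1/(1+f)) * (q₃ * (1 + f))) = q₁ + (1 - q₁) * q₃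
    field_simp
    try ring
  have hr1 : reward ≤ 1 := by
    rw [hr]; nlinarith
  refine ⟨hEmax, hr1, ?_⟩
  have : ((1 + f) / (1 + 2 * f)) * Emax = 1 := by
    rw [hEmax]; field_simp; try ring
  rw [this]; exact hr1
end

section
/- For 0 < f < 1, the function g(x) = (x - f) / (x + f·(x - 1 - x f)/((x-1)(1+f))) over x ≥ 1+f attains its minimum at x* = (f + 2 + sqrt(f(2-f)))/2, and the minimum value equals (1+f)(sqrt(f(2-f)) + 1) / ((1+f)·sqrt(f(2-f)) + 3f + 1). -/
/-- For 0 < f < 1, the function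
g(x) = (x - f)/(x + f(x - 1 - x f)/((x-1)(1+f))) on [1+f, ∞) attains its minimum at
x* = (f + 2 + √(f(2-f)))/2, with minimum value
(1+f)(√(f(2-f)) + 1)/((1+f)√(f(2-f)) + 3f + 1). -/
theorem three_variable_ratio_min (f : ℝ) (h0 : 0 < f) (h1 : f < 1) :
    let g : ℝ → ℝ := fun x =>
      (x - f) / (x + f * (x - 1 - x * f) / ((x - 1) * (1 + f)))
    let xstar : ℝ := (f + 2 + Real.sqrt (f * (2 - f))) / 2
    (∀ x : ℝ, 1 + f ≤ x → g xstar ≤ g x) ∧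
      g xstar = (1 + f) * (Real.sqrt (f * (2 - f)) + 1)
        / ((1 + f) * Real.sqrt (f * (2 - f)) + 3 * f + 1) := by
  intro g xstar
  set s : ℝ := Real.sqrt (f * (2 - f)) with hs
  have hs0 : (0:ℝ) ≤ s := Real.sqrt_nonneg _
  have hs2 : s * s = f * (2 - f) := Real.mul_self_sqrt (by nlinarith)
  have hsf : f < s := by nlinarith
  have hMden : (0:ℝ) < (1 + f) * s + 3 * f + 1 := by nlinarith
  -- rewrite g on the domain
  have hgx : ∀ x : ℝ, 1 + f ≤ x →
      g x = (x - f) * ((x - 1) * (1 + f)) / ((1 + f) * x ^ 2 - (1 + f * f) * x - f) := by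
    intro x hx
    have hx1 : (0:ℝ) < x - 1 := by linarith
    have hf1 : (0:ℝ) < 1 + f := by linarith
    have hden : x + f * (x - 1 - x * f) / ((x - 1) * (1 + f))
        = ((1 + f) * x ^ 2 - (1 + f * f) * x - f) / ((x - 1) * (1 + f)) := by
      field_simp
      ring
    show (x - f) / _ = _
    rw [hden, div_div_eq_mul_div]
  have hxs : 1 + f ≤ xstar := by
    show 1 + f ≤ (f + 2 + s) / 2
    linarith
  have hD : ∀ x : ℝ, 1 + f ≤ x → (0:ℝ) < (1 + f) * x ^ 2 - (1 + f * f) * x - f := by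
    intro x hx
    nlinarith [sq_nonneg (x - 1 - f)]
  -- minimum value
  have hval : g xstar = (1 + f) * (s + 1) / ((1 + f) * s + 3 * f + 1) := by
    rw [hgx xstar hxs]
    rw [div_eq_div_iff (ne_of_gt (hD xstar hxs)) (ne_of_gt hMden)]
    show (xstar - f) * ((xstar - 1) * (1 + f)) * ((1 + f) * s + 3 * f + 1)
        = (1 + f) * (s + 1) * ((1 + f) * xstar ^ 2 - (1 + f * f) * xstar - f)
    show ((f + 2 + s) / 2 - f) * (((f + 2 + s) / 2 - 1) * (1 + f)) * ((1 + f) * s + 3 * f + 1)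
        = (1 + f) * (s + 1) * ((1 + f) * ((f + 2 + s) / 2) ^ 2 - (1 + f * f) * ((f + 2 + s) / 2) - f)
    linear_combination (-(f + f * f) / 2) * hs2
  refine ⟨?_, hval⟩
  intro x hx
  rw [hval, hgx x hx]
  rw [div_le_div_iff₀ hMden (hD x hx)]
  have hkey : (x - f) * ((x - 1) * (1 + f)) * ((1 + f) * s + 3 * f + 1)
      = (1 + f) * (s + 1) * ((1 + f) * x ^ 2 - (1 + f * f) * x - f)
        + f * (1 + f) / 2 * (2 * x - f - 2 - s) ^ 2 := by
    linear_combination (-(f + f * f) / 2) * hs2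
  nlinarith [mul_nonneg (mul_nonneg h0.le (by linarith : (0:ℝ) ≤ 1 + f)) (sq_nonneg (2 * x - f - 2 - s))]
end

section
/- For 0 < f < 1, the expression (1+f)(sqrt(f(2-f)) + 1) / ((1+f)·sqrt(f(2-f)) + 3f + 1) is strictly less than (1+f)/(1+2f), and the two expressions are equal at f = 1. -/
/-- For 0 < f < 1,
(1+f)(√(f(2-f)) + 1)/((1+f)√(f(2-f)) + 3f + 1) < (1+f)/(1+2f),
and the two expressions are equal at f = 1. -/
theorem three_variable_beats_two_variable :
    (∀ f : ℝ, 0 < f → f < 1 →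
      (1 + f) * (Real.sqrt (f * (2 - f)) + 1)
          / ((1 + f) * Real.sqrt (f * (2 - f)) + 3 * f + 1)
        < (1 + f) / (1 + 2 * f)) ∧
    (1 + (1:ℝ)) * (Real.sqrt (1 * (2 - 1)) + 1)
        / ((1 + 1) * Real.sqrt (1 * (2 - 1)) + 3 * 1 + 1)
      = (1 + (1:ℝ)) / (1 + 2 * 1) := by
  constructor
  · intro f hf0 hf1
    set s := Real.sqrt (f * (2 - f)) with hs
    have hs0 : 0 ≤ s := Real.sqrt_nonneg _
    have hs2 : s ^ 2 = f * (2 - f) := by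
      rw [hs, sq]
      exact Real.mul_self_sqrt (by nlinarith)
    have hs1 : s < 1 := by nlinarith [sq_nonneg (s - 1), sq_nonneg (1 - f)]
    have hd1 : (0:ℝ) < (1 + f) * s + 3 * f + 1 := by nlinarith
    have hd2 : (0:ℝ) < 1 + 2 * f := by linarith
    rw [div_lt_div_iff₀ hd1 hd2]
    nlinarith [mul_pos hf0 (sub_pos.mpr hs1)]
  · norm_num
end

section
/- Let X₁, ..., X_n be independent random variables and T a real number, and let S = Σⱼ 1[Xⱼ ≥ T]. If P(∀j, Xⱼ < T) = e^{-λ}, then S is stochastically dominated by a Poisson random variable with mean λ; in particular, for any integer ℓ ≥ 0, P(S ≤ ℓ) ≥ e^{-λ} · Σ_{k=0}^{ℓ} λ^k / k!. -/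
open MeasureTheory ProbabilityTheory Finset

noncomputable def pcdfAux (l : ℝ) (m : ℕ) : ℝ :=
  Real.exp (-l) * ∑ k ∈ Finset.range m, l ^ k / k.factorial

lemma pcdfAux_nonneg {l : ℝ} (hl : 0 ≤ l) (m : ℕ) : 0 ≤ pcdfAux l m := by
  unfold pcdfAux
  have : (0:ℝ) ≤ ∑ k ∈ Finset.range m, l ^ k / k.factorial :=
    Finset.sum_nonneg fun k _ => by positivity
  positivity

lemma pcdfAux_le_one {l : ℝ} (hl : 0 ≤ l) (m : ℕ) : pcdfAux l m ≤ 1 := by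
  unfold pcdfAux
  have h := Real.sum_le_exp_of_nonneg hl m
  calc Real.exp (-l) * ∑ k ∈ Finset.range m, l ^ k / k.factorial
      ≤ Real.exp (-l) * Real.exp l := by
        exact mul_le_mul_of_nonneg_left h (Real.exp_pos _).le
    _ = 1 := by rw [← Real.exp_add]; simp

lemma sum_mono_aux {l : ℝ} (hl : 0 ≤ l) {m m' : ℕ} (h : m ≤ m') :
    ∑ k ∈ Finset.range m, l ^ k / k.factorial ≤ ∑ k ∈ Finset.range m', l ^ k / k.factorial := by
  apply Finset.sum_le_sum_of_subset_of_nonneg (Finset.range_subset_range.2 h)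
  intro k _ _; positivity

lemma addpow_div (l mu : ℝ) (m : ℕ) :
    (l + mu) ^ m / m.factorial
      = ∑ k ∈ Finset.range (m+1), mu ^ k / k.factorial * (l ^ (m-k) / (m-k).factorial) := by
  rw [add_comm l mu, add_pow, Finset.sum_div]
  apply Finset.sum_congr rfl
  intro k hk
  have hk' : k ≤ m := Nat.lt_succ_iff.mp (Finset.mem_range.mp hk)
  rw [Nat.cast_choose ℝ hk']
  have h1 : (k.factorial : ℝ) ≠ 0 := Nat.cast_ne_zero.2 k.factorial_ne_zero
  have h2 : ((m-k).factorial : ℝ) ≠ 0 := Nat.cast_ne_zero.2 (m-k).factorial_ne_zero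
  have h3 : (m.factorial : ℝ) ≠ 0 := Nat.cast_ne_zero.2 m.factorial_ne_zero
  field_simp

lemma conv_sum (l mu : ℝ) : ∀ m : ℕ,
    ∑ j ∈ Finset.range m, (l + mu) ^ j / j.factorial
      = ∑ k ∈ Finset.range m, mu ^ k / k.factorial *
          ∑ i ∈ Finset.range (m - k), l ^ i / i.factorial := by
  intro m
  induction m with
  | zero => simp
  | succ m ih =>
    rw [Finset.sum_range_succ, ih, addpow_div]
    have hsplit : ∀ k ∈ Finset.range (m+1),
        mu ^ k / k.factorial * ∑ i ∈ Finset.range (m + 1 - k), l ^ i / i.factorial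
          = mu ^ k / k.factorial * ∑ i ∈ Finset.range (m - k), l ^ i / i.factorial
            + mu ^ k / k.factorial * (l ^ (m-k) / (m-k).factorial) := by
      intro k hk
      have hk' : k ≤ m := Nat.lt_succ_iff.mp (Finset.mem_range.mp hk)
      have : m + 1 - k = (m - k) + 1 := by omega
      rw [this, Finset.sum_range_succ, mul_add]
    rw [Finset.sum_congr rfl hsplit, Finset.sum_add_distrib]
    congr 1
    rw [Finset.sum_range_succ]
    simp

lemma pcdfAux_conv_le {l mu : ℝ} (hl : 0 ≤ l) (hmu : 0 ≤ mu) (m : ℕ) :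
    pcdfAux (l + mu) m ≤ Real.exp (-mu) * pcdfAux l m + (1 - Real.exp (-mu)) * pcdfAux l (m-1) := by
  rcases m with _ | m'
  · simp [pcdfAux]
  have hexp : Real.exp (-(l + mu)) = Real.exp (-l) * Real.exp (-mu) := by
    rw [← Real.exp_add]; ring_nf
  unfold pcdfAux
  rw [conv_sum, Finset.sum_range_succ']
  simp only [pow_zero, Nat.factorial_zero, Nat.cast_one]
  have hTmono : ∀ k : ℕ,
      ∑ i ∈ Finset.range (m' + 1 - (k+1)), l ^ i / i.factorial
        ≤ ∑ i ∈ Finset.range m', l ^ i / i.factorial := by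
    intro k; exact sum_mono_aux hl (by omega)
  have hTnonneg : (0:ℝ) ≤ ∑ i ∈ Finset.range m', l ^ i / i.factorial :=
    Finset.sum_nonneg fun k _ => by positivity
  have hbound : ∑ k ∈ Finset.range m', mu ^ (k+1) / (k+1).factorial *
        ∑ i ∈ Finset.range (m' + 1 - (k+1)), l ^ i / i.factorial
      ≤ (Real.exp mu - 1) * ∑ i ∈ Finset.range m', l ^ i / i.factorial := by
    calc ∑ k ∈ Finset.range m', mu ^ (k+1) / (k+1).factorial *
          ∑ i ∈ Finset.range (m' + 1 - (k+1)), l ^ i / i.factorial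
        ≤ ∑ k ∈ Finset.range m', mu ^ (k+1) / (k+1).factorial *
          ∑ i ∈ Finset.range m', l ^ i / i.factorial := by
          apply Finset.sum_le_sum
          intro k _
          exact mul_le_mul_of_nonneg_left (hTmono k) (by positivity)
      _ = (∑ k ∈ Finset.range m', mu ^ (k+1) / (k+1).factorial) *
            ∑ i ∈ Finset.range m', l ^ i / i.factorial := by
          rw [← Finset.sum_mul]
      _ ≤ (Real.exp mu - 1) * ∑ i ∈ Finset.range m', l ^ i / i.factorial := by
          apply mul_le_mul_of_nonneg_right _ hTnonneg
          have h := Real.sum_le_exp_of_nonneg hmu (m' + 1)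
          rw [Finset.sum_range_succ'] at h
          simp only [pow_zero, Nat.factorial_zero, Nat.cast_one] at h
          linarith
  rw [mul_add, hexp]
  have key : Real.exp (-l) * Real.exp (-mu) *
      (∑ k ∈ Finset.range m', mu ^ (k+1) / (k+1).factorial *
        ∑ i ∈ Finset.range (m' + 1 - (k+1)), l ^ i / i.factorial)
      ≤ (1 - Real.exp (-mu)) * (Real.exp (-l) * ∑ i ∈ Finset.range m', l ^ i / i.factorial) := by
    calc Real.exp (-l) * Real.exp (-mu) *
        (∑ k ∈ Finset.range m', mu ^ (k+1) / (k+1).factorial *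
          ∑ i ∈ Finset.range (m' + 1 - (k+1)), l ^ i / i.factorial)
        ≤ Real.exp (-l) * Real.exp (-mu) *
            ((Real.exp mu - 1) * ∑ i ∈ Finset.range m', l ^ i / i.factorial) := by
          exact mul_le_mul_of_nonneg_left hbound (by positivity)
      _ = Real.exp (-l) * (Real.exp (-mu) * (Real.exp mu - 1)) *
            ∑ i ∈ Finset.range m', l ^ i / i.factorial := by ring
      _ = (1 - Real.exp (-mu)) * (Real.exp (-l) * ∑ i ∈ Finset.range m', l ^ i / i.factorial) := by
          have h9 : Real.exp (-mu) * (Real.exp mu - 1) = 1 - Real.exp (-mu) := by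
            rw [mul_sub, ← Real.exp_add]; simp
          rw [h9]; ring
  have heq : Real.exp (-l) * Real.exp (-mu) *
      (1 / 1 * ∑ i ∈ Finset.range (m' + 1 - 0), l ^ i / i.factorial)
      = Real.exp (-mu) * (Real.exp (-l) * ∑ i ∈ Finset.range (m' + 1), l ^ i / i.factorial) := by
    simp only [Nat.sub_zero]; ring
  have hms : m' + 1 - 1 = m' := by omega
  rw [hms]
  linarith [key, heq]

lemma key_lemma {Ω : Type*} [MeasurableSpace Ω] (μ : Measure Ω) [IsProbabilityMeasure μ]
    {n : ℕ} (f : Fin n → Ω → ℕ) (hf : ∀ j, Measurable (f j))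
    (hrange : ∀ j ω, f j ω ≤ 1)
    (hind : iIndepFun f μ)
    (lamf : Fin n → ℝ) (hlamf : ∀ j, 0 ≤ lamf j)
    (hp : ∀ j, (μ {ω | f j ω = 0}).toReal = Real.exp (-(lamf j))) (s : Finset (Fin n)) :
    ∀ m : ℕ, pcdfAux (∑ j ∈ s, lamf j) m ≤ (μ {ω | ∑ j ∈ s, f j ω < m}).toReal := by
  classical
  induction s using Finset.induction_on with
  | empty =>
    intro m
    rcases m with _ | m'
    · simpa [pcdfAux] using ENNReal.toReal_nonneg
    · have hset : {ω : Ω | ∑ j ∈ (∅ : Finset (Fin n)), f j ω < m' + 1} = Set.univ := by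
        ext ω; simp
      rw [hset, Finset.sum_empty]
      simp only [measure_univ, ENNReal.toReal_one]
      exact pcdfAux_le_one le_rfl _
  | insert j0 s hj0 ih =>
    intro m
    -- event decomposition
    have hsum : ∀ ω, ∑ j ∈ insert j0 s, f j ω = f j0 ω + ∑ j ∈ s, f j ω := by
      intro ω; rw [Finset.sum_insert hj0]
    have hset : {ω | ∑ j ∈ insert j0 s, f j ω < m}
        = ({ω | f j0 ω = 0} ∩ {ω | ∑ j ∈ s, f j ω < m})
          ∪ ({ω | f j0 ω = 1} ∩ {ω | ∑ j ∈ s, f j ω < m - 1}) := by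
      ext ω
      rcases Nat.le_one_iff_eq_zero_or_eq_one.mp (hrange j0 ω) with h0 | h1
      · simp [Set.mem_setOf_eq, hsum ω, h0]
      · simp only [Set.mem_setOf_eq, hsum ω, h1, Set.mem_union, Set.mem_inter_iff]
        constructor
        · intro h; exact Or.inr ⟨trivial, by omega⟩
        · rintro (⟨h', -⟩ | ⟨-, h'⟩)
          · exact absurd h' one_ne_zero
          · omega
    have hSmeas : Measurable (fun ω => ∑ j ∈ s, f j ω) :=
      Finset.measurable_sum s fun j _ => hf j
    have hm1 : MeasurableSet {ω | f j0 ω = 0} := hf j0 (MeasurableSet.singleton 0)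
    have hm2 : MeasurableSet {ω | f j0 ω = 1} := hf j0 (MeasurableSet.singleton 1)
    have hm3 : ∀ k : ℕ, MeasurableSet {ω | ∑ j ∈ s, f j ω < k} :=
      fun k => hSmeas measurableSet_Iio
    have hdisj : Disjoint
        ({ω | f j0 ω = 0} ∩ {ω | ∑ j ∈ s, f j ω < m})
        ({ω | f j0 ω = 1} ∩ {ω | ∑ j ∈ s, f j ω < m - 1}) := by
      apply Set.disjoint_left.mpr
      rintro ω ⟨h0, -⟩ ⟨h1, -⟩
      simp only [Set.mem_setOf_eq] at h0 h1
      omega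
    -- independence
    have hIndep : IndepFun (fun ω => ∑ j ∈ s, f j ω) (f j0) μ := by
      have := hind.indepFun_finsetSum_of_notMem hf hj0
      have heq : (∑ j ∈ s, f j) = fun ω => ∑ j ∈ s, f j ω := by
        funext ω; simp [Finset.sum_apply]
      rwa [heq] at this
    have hprod : ∀ (k : ℕ) (t : Set ℕ),
        μ ({ω | f j0 ω ∈ t} ∩ {ω | ∑ j ∈ s, f j ω < k})
          = μ {ω | f j0 ω ∈ t} * μ {ω | ∑ j ∈ s, f j ω < k} := by
      intro k t
      have := hIndep.measure_inter_preimage_eq_mul (Set.Iio k) t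
        measurableSet_Iio (MeasurableSet.of_discrete)
      rw [Set.inter_comm]
      exact this.trans (mul_comm _ _)
    have e1 : μ ({ω | f j0 ω = 0} ∩ {ω | ∑ j ∈ s, f j ω < m})
        = μ {ω | f j0 ω = 0} * μ {ω | ∑ j ∈ s, f j ω < m} := by
      simpa using hprod m {0}
    have e2 : μ ({ω | f j0 ω = 1} ∩ {ω | ∑ j ∈ s, f j ω < m - 1})
        = μ {ω | f j0 ω = 1} * μ {ω | ∑ j ∈ s, f j ω < m - 1} := by
      simpa using hprod (m-1) {1}
    -- measure computation
    have hμ : μ {ω | ∑ j ∈ insert j0 s, f j ω < m}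
        = μ {ω | f j0 ω = 0} * μ {ω | ∑ j ∈ s, f j ω < m}
          + μ {ω | f j0 ω = 1} * μ {ω | ∑ j ∈ s, f j ω < m - 1} := by
      rw [hset, measure_union hdisj (hm2.inter (hm3 (m-1))), e1, e2]
    -- f j0 = 1 event is complement of f j0 = 0 event
    have hcompl : {ω | f j0 ω = 1} = {ω | f j0 ω = 0}ᶜ := by
      ext ω
      have := hrange j0 ω
      simp only [Set.mem_setOf_eq, Set.mem_compl_iff]
      omega
    have hp0 : (μ {ω | f j0 ω = 0}).toReal = Real.exp (-(lamf j0)) := hp j0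
    have hle1 : μ {ω | f j0 ω = 0} ≤ 1 := prob_le_one
    have hp1 : (μ {ω | f j0 ω = 1}).toReal = 1 - Real.exp (-(lamf j0)) := by
      rw [hcompl, prob_compl_eq_one_sub hm1,
        ENNReal.toReal_sub_of_le hle1 ENNReal.one_ne_top, ENNReal.toReal_one, hp0]
    have hfin : ∀ (A : Set Ω), μ A ≠ ⊤ := fun A => measure_ne_top μ A
    have htoReal : (μ {ω | ∑ j ∈ insert j0 s, f j ω < m}).toReal
        = Real.exp (-(lamf j0)) * (μ {ω | ∑ j ∈ s, f j ω < m}).toReal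
          + (1 - Real.exp (-(lamf j0))) * (μ {ω | ∑ j ∈ s, f j ω < m - 1}).toReal := by
      rw [hμ, ENNReal.toReal_add, ENNReal.toReal_mul, ENNReal.toReal_mul, hp0, hp1]
      · exact ENNReal.mul_ne_top (hfin _) (hfin _)
      · exact ENNReal.mul_ne_top (hfin _) (hfin _)
    rw [htoReal, Finset.sum_insert hj0]
    have hsl : 0 ≤ ∑ j ∈ s, lamf j := Finset.sum_nonneg fun j _ => hlamf j
    calc pcdfAux (lamf j0 + ∑ j ∈ s, lamf j) m
        = pcdfAux ((∑ j ∈ s, lamf j) + lamf j0) m := by rw [add_comm]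
      _ ≤ Real.exp (-(lamf j0)) * pcdfAux (∑ j ∈ s, lamf j) m
          + (1 - Real.exp (-(lamf j0))) * pcdfAux (∑ j ∈ s, lamf j) (m-1) :=
          pcdfAux_conv_le hsl (hlamf j0) m
      _ ≤ Real.exp (-(lamf j0)) * (μ {ω | ∑ j ∈ s, f j ω < m}).toReal
          + (1 - Real.exp (-(lamf j0))) * (μ {ω | ∑ j ∈ s, f j ω < m - 1}).toReal := by
          have h1 : Real.exp (-(lamf j0)) ≤ 1 := by
            rw [Real.exp_le_one_iff]; linarith [hlamf j0]
          apply add_le_add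
          · exact mul_le_mul_of_nonneg_left (ih m) (Real.exp_pos _).le
          · exact mul_le_mul_of_nonneg_left (ih (m-1)) (by linarith)

lemma tsum_tail_eq (lam : ℝ) (hlam : 0 ≤ lam) (m : ℕ) :
    ∑' k : ℕ, (if m ≤ k then Real.exp (-lam) * lam ^ k / k.factorial else 0)
      = 1 - pcdfAux lam m := by
  have ha_nonneg : ∀ k : ℕ, 0 ≤ Real.exp (-lam) * lam ^ k / k.factorial := fun k => by positivity
  have hsumm : Summable (fun k : ℕ => Real.exp (-lam) * lam ^ k / k.factorial) := by
    have h := (Real.summable_pow_div_factorial lam).mul_left (Real.exp (-lam))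
    simpa [mul_div_assoc] using h
  have hsumm_ge : Summable
      (fun k : ℕ => if m ≤ k then Real.exp (-lam) * lam ^ k / k.factorial else 0) := by
    apply Summable.of_nonneg_of_le (fun k => ?_) (fun k => ?_) hsumm
    · by_cases h : m ≤ k <;> simp [h, ha_nonneg k]
    · by_cases h : m ≤ k <;> simp [h, ha_nonneg k]
  have hsumm_lt : Summable
      (fun k : ℕ => if k < m then Real.exp (-lam) * lam ^ k / k.factorial else 0) := by
    apply summable_of_ne_finset_zero (s := Finset.range m)
    intro b hb
    rw [Finset.mem_range] at hb
    simp [hb]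
  have hlt_tsum : ∑' k : ℕ, (if k < m then Real.exp (-lam) * lam ^ k / k.factorial else 0)
      = ∑ k ∈ Finset.range m, Real.exp (-lam) * lam ^ k / k.factorial := by
    have h1 : ∑' k : ℕ, (if k < m then Real.exp (-lam) * lam ^ k / k.factorial else 0)
        = ∑ k ∈ Finset.range m, (if k < m then Real.exp (-lam) * lam ^ k / k.factorial else 0) := by
      apply tsum_eq_sum
      intro b hb
      rw [Finset.mem_range] at hb
      simp [hb]
    rw [h1]
    apply Finset.sum_congr rfl
    intro k hk
    rw [Finset.mem_range] at hk
    simp [hk]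
  have htot : ∑' k : ℕ, Real.exp (-lam) * lam ^ k / k.factorial = 1 := by
    have hexp : ∑' k : ℕ, lam ^ k / (k.factorial : ℝ) = Real.exp lam := by
      rw [Real.exp_eq_exp_ℝ, NormedSpace.exp_eq_tsum_div]
    calc ∑' k : ℕ, Real.exp (-lam) * lam ^ k / k.factorial
        = ∑' k : ℕ, Real.exp (-lam) * (lam ^ k / k.factorial) := by
          congr 1; funext k; rw [mul_div_assoc]
      _ = Real.exp (-lam) * ∑' k : ℕ, lam ^ k / (k.factorial : ℝ) := tsum_mul_left
      _ = Real.exp (-lam) * Real.exp lam := by rw [hexp]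
      _ = 1 := by rw [← Real.exp_add]; simp
  have hadd : ∑' k : ℕ, Real.exp (-lam) * lam ^ k / k.factorial
      = (∑' k : ℕ, (if m ≤ k then Real.exp (-lam) * lam ^ k / k.factorial else 0))
        + ∑' k : ℕ, (if k < m then Real.exp (-lam) * lam ^ k / k.factorial else 0) := by
    rw [← Summable.tsum_add hsumm_ge hsumm_lt]
    congr 1; funext k
    by_cases h : m ≤ k
    · have : ¬ k < m := not_lt.mpr h
      simp [h, this]
    · have : k < m := not_le.mp h
      simp [h, this]
  have hpc : pcdfAux lam m = ∑ k ∈ Finset.range m, Real.exp (-lam) * lam ^ k / k.factorial := by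
    unfold pcdfAux
    rw [Finset.mul_sum]
    congr 1; funext k; rw [mul_div_assoc]
  rw [htot, hlt_tsum, ← hpc] at hadd
  linarith

/-- Let X₁,...,Xₙ be independent random variables, T real,
S = Σⱼ 1[Xⱼ ≥ T]. If P(∀ j, Xⱼ < T) = e^{-λ}, then S is stochastically dominated by a
Poisson(λ) variable — i.e. P(S ≥ m) ≤ P(Poisson(λ) ≥ m) for all m — and in particular
P(S ≤ ℓ) ≥ e^{-λ}·Σ_{k=0}^{ℓ} λ^k/k! for every ℓ ≥ 0. -/
theorem count_above_threshold_poisson_dominated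
    {Ω : Type*} [MeasurableSpace Ω] (μ : Measure Ω) [IsProbabilityMeasure μ]
    (n : ℕ) (X : Fin n → Ω → ℝ) (hmeas : ∀ j, Measurable (X j))
    (hindep : iIndepFun X μ)
    (T lam : ℝ) (hlam : 0 ≤ lam)
    (hZero : μ {ω | ∀ j, X j ω < T} = ENNReal.ofReal (Real.exp (-lam)))
    (S : Ω → ℕ) (hS : ∀ ω, S ω = ∑ j, if T ≤ X j ω then 1 else 0) :
    (∀ m : ℕ,
      (μ {ω | m ≤ S ω}).toReal ≤ ∑' k : ℕ, if m ≤ k then Real.exp (-lam) * lam ^ k / k.factorial else 0) ∧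
    (∀ ℓ : ℕ,
      Real.exp (-lam) * ∑ k ∈ Finset.range (ℓ + 1), lam ^ k / k.factorial ≤
        (μ {ω | S ω ≤ ℓ}).toReal) := by
  classical
  set f : Fin n → Ω → ℕ := fun j ω => if T ≤ X j ω then 1 else 0 with hfdef
  have hg : ∀ _j : Fin n, Measurable (fun x : ℝ => if T ≤ x then (1:ℕ) else 0) := fun _ =>
    Measurable.ite measurableSet_Ici measurable_const measurable_const
  have hf : ∀ j, Measurable (f j) := fun j => (hg j).comp (hmeas j)
  have hrange : ∀ j ω, f j ω ≤ 1 := by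
    intro j ω
    simp only [hfdef]
    split <;> simp
  have hind' : iIndepFun f μ :=
    hindep.comp (fun _j x => if T ≤ x then 1 else 0) hg
  have hzero_set : ∀ j, (f j ⁻¹' ({0} : Set ℕ)) = {ω | f j ω = 0} := by
    intro j; rfl
  have hprodEq : ∏ j, μ {ω | f j ω = 0} = ENNReal.ofReal (Real.exp (-lam)) := by
    have h := hind'.measure_inter_preimage_eq_mul (S := Finset.univ)
      (sets := fun _ => ({0} : Set ℕ)) (fun i _ => MeasurableSet.of_discrete)
    have hset : (⋂ i ∈ Finset.univ, f i ⁻¹' ({0} : Set ℕ)) = {ω | ∀ j, X j ω < T} := by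
      ext ω
      simp only [Set.mem_iInter, Set.mem_preimage, Set.mem_singleton_iff, Finset.mem_univ,
        Set.mem_setOf_eq, forall_true_left, hfdef]
      constructor
      · intro h j
        have := h j
        by_contra hc
        rw [not_lt] at hc
        simp [hc] at this
      · intro h j
        have := h j
        rw [if_neg (not_le.mpr this)]
    rw [hset, hZero] at h
    have h2 : ∏ j, μ {ω | f j ω = 0} = ∏ i, μ (f i ⁻¹' (fun _ => ({0} : Set ℕ)) i) :=
      Finset.prod_congr rfl fun j _ => rfl
    rw [h2, ← h]
  have hr_le1 : ∀ j, (μ {ω | f j ω = 0}).toReal ≤ 1 := by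
    intro j
    have := prob_le_one (μ := μ) (s := {ω | f j ω = 0})
    calc (μ {ω | f j ω = 0}).toReal ≤ (1 : ENNReal).toReal :=
          ENNReal.toReal_mono ENNReal.one_ne_top this
      _ = 1 := ENNReal.toReal_one
  have hprod_r : ∏ j, (μ {ω | f j ω = 0}).toReal = Real.exp (-lam) := by
    rw [← ENNReal.toReal_prod, hprodEq, ENNReal.toReal_ofReal (Real.exp_pos _).le]
  have hr_ne : ∀ j, (μ {ω | f j ω = 0}).toReal ≠ 0 := by
    intro j
    intro hj
    rw [Finset.prod_eq_zero (Finset.mem_univ j) hj] at hprod_r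
    exact absurd hprod_r.symm (Real.exp_pos _).ne'
  have hr_pos : ∀ j, 0 < (μ {ω | f j ω = 0}).toReal := fun j =>
    lt_of_le_of_ne ENNReal.toReal_nonneg (Ne.symm (hr_ne j))
  set lamf : Fin n → ℝ := fun j => -Real.log ((μ {ω | f j ω = 0}).toReal) with hlamfdef
  have hp : ∀ j, (μ {ω | f j ω = 0}).toReal = Real.exp (-(lamf j)) := by
    intro j
    rw [hlamfdef]
    simp only [neg_neg]
    rw [Real.exp_log (hr_pos j)]
  have hlamf : ∀ j, 0 ≤ lamf j := by
    intro j
    rw [hlamfdef]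
    simp only [neg_nonneg]
    exact Real.log_nonpos ENNReal.toReal_nonneg (hr_le1 j)
  have hsum_lamf : ∑ j, lamf j = lam := by
    have hlog : Real.log (∏ j, (μ {ω | f j ω = 0}).toReal)
        = ∑ j, Real.log ((μ {ω | f j ω = 0}).toReal) :=
      Real.log_prod (fun j _ => hr_ne j)
    have : ∑ j, lamf j = -Real.log (∏ j, (μ {ω | f j ω = 0}).toReal) := by
      rw [hlog, hlamfdef, ← Finset.sum_neg_distrib]
    rw [this, hprod_r, Real.log_exp, neg_neg]
  have K : ∀ m : ℕ, pcdfAux lam m ≤ (μ {ω | S ω < m}).toReal := by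
    intro m
    have h := key_lemma μ f hf hrange hind' lamf hlamf hp Finset.univ m
    rw [hsum_lamf] at h
    have hset : {ω | ∑ j, f j ω < m} = {ω | S ω < m} := by
      ext ω
      simp only [Set.mem_setOf_eq, hS ω, hfdef]
    rwa [hset] at h
  have hSmeas : Measurable S := by
    have : S = fun ω => ∑ j, f j ω := by
      funext ω; rw [hS ω]
    rw [this]
    exact Finset.measurable_sum _ fun j _ => hf j
  constructor
  · intro m
    have hcompl : {ω | m ≤ S ω} = {ω | S ω < m}ᶜ := by
      ext ω; simp [not_lt]
    have hmeasset : MeasurableSet {ω | S ω < m} := hSmeas measurableSet_Iio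
    have hμc : μ {ω | m ≤ S ω} = 1 - μ {ω | S ω < m} := by
      rw [hcompl, prob_compl_eq_one_sub hmeasset]
    have htr : (μ {ω | m ≤ S ω}).toReal = 1 - (μ {ω | S ω < m}).toReal := by
      rw [hμc, ENNReal.toReal_sub_of_le prob_le_one ENNReal.one_ne_top, ENNReal.toReal_one]
    rw [htr, tsum_tail_eq lam hlam m]
    linarith [K m]
  · intro ℓ
    have h := K (ℓ + 1)
    have hset : {ω | S ω < ℓ + 1} = {ω | S ω ≤ ℓ} := by
      ext ω; simp [Nat.lt_succ_iff]
    rw [hset] at h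
    exact h
end

section
/- For every f ∈ (0, 1/2), the following inequality chain holds: (2 + 1/f)^{f/(1+f)} < (2/f)^f = e^{f·ln(2/f)} < 1 + 2f·ln(2/f), and consequently 1/( f/(1+f) + (2 + 1/f)^{f/(1+f)} ) > 1/(1 + 2f·ln(4/f)) > 1 - 2f·ln(4/f). -/
open Real

/-- log t ≤ t / e for t > 0. -/
lemma log_le_div_e {t : ℝ} (ht : 0 < t) : Real.log t ≤ t / Real.exp 1 := by
  have h := Real.add_one_le_exp (Real.log t - 1)
  rw [Real.exp_sub, Real.exp_log ht] at h
  have he : 0 < Real.exp 1 := Real.exp_pos 1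
  linarith

/-- exp x < 1 + 2x for 0 < x ≤ 1. -/
lemma exp_lt_one_add_two_mul {x : ℝ} (hx : 0 < x) (hx1 : x ≤ 1) :
    Real.exp x < 1 + 2 * x := by
  have h := Real.exp_bound' hx.le hx1 (n := 2) (by norm_num)
  simp [Finset.sum_range_succ] at h
  nlinarith [sq_nonneg x]

lemma one_sub_lt_one_div_one_add {y : ℝ} (hy : 0 < y) : 1 - y < 1 / (1 + y) := by
  rw [lt_div_iff₀ (by linarith : (0:ℝ) < 1 + y)]
  nlinarith

/-- For f ∈ (0, 1/2):
(2 + 1/f)^(f/(1+f)) < (2/f)^f = e^{f·ln(2/f)} < 1 + 2f·ln(2/f), and consequently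
1/(f/(1+f) + (2 + 1/f)^(f/(1+f))) > 1/(1 + 2f·ln(4/f)) > 1 - 2f·ln(4/f). -/
theorem small_buyback_ratio_asymptotics (f : ℝ) (h0 : 0 < f) (h1 : f < 1 / 2) :
    (2 + 1 / f) ^ (f / (1 + f)) < (2 / f) ^ f ∧
    (2 / f) ^ f = Real.exp (f * Real.log (2 / f)) ∧
    Real.exp (f * Real.log (2 / f)) < 1 + 2 * f * Real.log (2 / f) ∧
    1 / (1 + 2 * f * Real.log (4 / f))
      < 1 / (f / (1 + f) + (2 + 1 / f) ^ (f / (1 + f))) ∧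
    1 - 2 * f * Real.log (4 / f) < 1 / (1 + 2 * f * Real.log (4 / f)) := by
  have hfpos := h0
  have h1f : (0:ℝ) < 1 + f := by linarith
  have hinv : (0:ℝ) < 1 / f := by positivity
  have hb1 : (1:ℝ) < 2 + 1 / f := by linarith
  have hb0 : (0:ℝ) < 2 + 1 / f := by linarith
  have h2f1 : (1:ℝ) < 2 / f := by
    rw [lt_div_iff₀ h0]; linarith
  have h2f0 : (0:ℝ) < 2 / f := by positivity
  have hlt : 2 + 1 / f < 2 / f := by
    rw [lt_div_iff₀ h0]
    have he : (2 + 1 / f) * f = 2 * f + 1 := by field_simp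
    rw [he]; linarith
  -- log facts
  have hlog2f : 0 < Real.log (2 / f) := Real.log_pos h2f1
  have hlogb : 0 < Real.log (2 + 1 / f) := Real.log_pos hb1
  have hloglt : Real.log (2 + 1 / f) < Real.log (2 / f) := Real.log_lt_log hb0 hlt
  -- part 1
  have hexp1 : f / (1 + f) < f := by
    rw [div_lt_iff₀ h1f]; nlinarith
  have p1 : (2 + 1 / f) ^ (f / (1 + f)) < (2 / f) ^ f := by
    rw [Real.rpow_def_of_pos hb0, Real.rpow_def_of_pos h2f0]
    apply Real.exp_lt_exp.2
    have hd0 : 0 < f / (1 + f) := by positivity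
    calc Real.log (2 + 1 / f) * (f / (1 + f))
        < Real.log (2 / f) * (f / (1 + f)) := by
          exact mul_lt_mul_of_pos_right hloglt hd0
      _ < Real.log (2 / f) * f := mul_lt_mul_of_pos_left hexp1 hlog2f
  -- part 2
  have p2 : (2 / f) ^ f = Real.exp (f * Real.log (2 / f)) := by
    rw [Real.rpow_def_of_pos h2f0, mul_comm]
  -- part 3
  have hx1 : f * Real.log (2 / f) ≤ 1 := by
    have h := log_le_div_e h2f0
    have he : (2:ℝ) ≤ Real.exp 1 := by
      have := Real.add_one_le_exp 1; linarith
    have : f * Real.log (2 / f) ≤ f * ((2 / f) / Real.exp 1) :=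
      mul_le_mul_of_nonneg_left h h0.le
    have heq : f * ((2 / f) / Real.exp 1) = 2 / Real.exp 1 := by
      field_simp
    rw [heq] at this
    have : 2 / Real.exp 1 ≤ 1 := by
      rw [div_le_one (Real.exp_pos 1)]; exact he
    linarith [mul_le_mul_of_nonneg_left h h0.le, this]
  have hx0 : 0 < f * Real.log (2 / f) := by positivity
  have p3 : Real.exp (f * Real.log (2 / f)) < 1 + 2 * f * Real.log (2 / f) := by
    have := exp_lt_one_add_two_mul hx0 hx1
    calc Real.exp (f * Real.log (2 / f)) < 1 + 2 * (f * Real.log (2 / f)) := this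
      _ = 1 + 2 * f * Real.log (2 / f) := by ring
  -- relations with log(4/f)
  have h4f1 : (1:ℝ) < 4 / f := by rw [lt_div_iff₀ h0]; linarith
  have hlog4f : 0 < Real.log (4 / f) := Real.log_pos h4f1
  have hlog4eq : Real.log (4 / f) = Real.log 2 + Real.log (2 / f) := by
    rw [← Real.log_mul (by norm_num) (ne_of_gt h2f0)]
    norm_num
    ring_nf
  have hlog2 : (1:ℝ)/2 < Real.log 2 := by
    have h := Real.exp_one_lt_d9
    have hsq : Real.exp (1/2) * Real.exp (1/2) = Real.exp 1 := by
      rw [← Real.exp_add]; norm_num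
    have hlt2 : Real.exp (1/2 : ℝ) < 2 := by nlinarith [Real.exp_pos (1/2 : ℝ)]
    rw [show (1:ℝ)/2 = (1/2 : ℝ) from rfl]
    exact (Real.lt_log_iff_exp_lt (by norm_num)).2 hlt2
  -- part 4
  have hdenR : 0 < f / (1 + f) + (2 + 1 / f) ^ (f / (1 + f)) := by
    have := Real.rpow_pos_of_pos hb0 (f / (1 + f))
    positivity
  have hdenL : 0 < 1 + 2 * f * Real.log (4 / f) := by positivity
  have hchain : f / (1 + f) + (2 + 1 / f) ^ (f / (1 + f)) < 1 + 2 * f * Real.log (4 / f) := by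
    have hA : (2 + 1 / f) ^ (f / (1 + f)) < 1 + 2 * f * Real.log (2 / f) := by
      calc (2 + 1 / f) ^ (f / (1 + f)) < (2 / f) ^ f := p1
        _ = Real.exp (f * Real.log (2 / f)) := p2
        _ < 1 + 2 * f * Real.log (2 / f) := p3
    have hB : f / (1 + f) < 2 * f * Real.log 2 := by
      have hf2 : f < 2 * f * Real.log 2 := by
        nlinarith [mul_pos h0 (by linarith : (0:ℝ) < 2 * Real.log 2 - 1)]
      linarith [hexp1]
    rw [hlog4eq]
    have hexpand : 2 * f * (Real.log 2 + Real.log (2 / f))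
        = 2 * f * Real.log 2 + 2 * f * Real.log (2 / f) := by ring
    linarith [hA, hB]
  have p4 : 1 / (1 + 2 * f * Real.log (4 / f))
      < 1 / (f / (1 + f) + (2 + 1 / f) ^ (f / (1 + f))) :=
    one_div_lt_one_div_of_lt hdenR hchain
  -- part 5
  have p5 : 1 - 2 * f * Real.log (4 / f) < 1 / (1 + 2 * f * Real.log (4 / f)) :=
    one_sub_lt_one_div_one_add (by positivity)
  exact ⟨p1, p2, p3, p4, p5⟩
end

section
/- Let 0 < f < 1/256, n = ⌈log₂(1/f)⌉, and define a_n = 1, a_{n-k-1} = (1 - (f/(1+f))·2^k)·a_{n-k}. Set ALG = 1 - f·Σ_{k=1}^{n-1} a_{n-k} and OPT = Σ_{k=0}^{n-1} 2^{-(k+1)}·a_{n-k}. Then ALG ≤ 1 + 3f - f·log₂(1/f), OPT ≥ 1 - f - (1/2)·f·log₂(1/f), and ALG < (1 - (1/2)·f·log₂(1/(256f)))·OPT. -/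
set_option maxHeartbeats 1000000


/-- Let 0 < f < 1/256, n = ⌈log₂(1/f)⌉, a_n = 1,
a_{n-k-1} = (1 - (f/(1+f))·2^k)·a_{n-k} (here b k = a_{n-k}),
ALG = 1 - f·Σ_{k=1}^{n-1} a_{n-k} and OPT = Σ_{k=0}^{n-1} 2^{-(k+1)}·a_{n-k}. Then
ALG ≤ 1 + 3f - f·log₂(1/f), OPT ≥ 1 - f - (1/2)f·log₂(1/f), and
ALG < (1 - (1/2)f·log₂(1/(256f)))·OPT. -/
theorem multistage_counterexample_bounds (f : ℝ) (h0 : 0 < f) (h1 : f < 1 / 256)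
    (n : ℕ) (hn : n = ⌈Real.logb 2 (1 / f)⌉₊)
    (b : ℕ → ℝ) (hb0 : b 0 = 1)
    (hbrec : ∀ k : ℕ, b (k + 1) = (1 - f / (1 + f) * 2 ^ k) * b k) :
    let ALG : ℝ := 1 - f * ∑ k ∈ Finset.Icc 1 (n - 1), b k
    let OPT : ℝ := ∑ k ∈ Finset.range n, (1 / 2 : ℝ) ^ (k + 1) * b k
    ALG ≤ 1 + 3 * f - f * Real.logb 2 (1 / f) ∧
    1 - f - (1 / 2) * f * Real.logb 2 (1 / f) ≤ OPT ∧
    ALG < (1 - (1 / 2) * f * Real.logb 2 (1 / (256 * f))) * OPT := by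
  intro ALG OPT
  set L := Real.logb 2 (1 / f) with hL
  set c := f / (1 + f) with hc
  have hf' : (0:ℝ) < 1 / f := by positivity
  have hc0 : 0 ≤ c := by positivity
  have hcf : c ≤ f := by
    rw [hc]; exact div_le_self h0.le (by linarith)
  have hceq : c * (1 + f) = f := by
    rw [hc]; field_simp
  -- L > 8
  have hL8 : (8:ℝ) < L := by
    have h256 : (256:ℝ) < 1 / f := by
      rw [lt_div_iff₀ h0]; linarith
    have := Real.logb_lt_logb (by norm_num : (1:ℝ) < 2) (by norm_num : (0:ℝ) < 256) h256
    rwa [show Real.logb 2 256 = 8 by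
      rw [show (256:ℝ) = 2^(8:ℕ) by norm_num, Real.logb_pow]; simp] at this
  have hLn : L ≤ (n:ℝ) := by rw [hn]; exact Nat.le_ceil L
  have hnL : (n:ℝ) < L + 1 := by
    rw [hn]; exact Nat.ceil_lt_add_one (by linarith)
  have hn9 : 1 ≤ n := by
    have h8 : (8:ℝ) < (n:ℝ) := lt_of_lt_of_le hL8 hLn
    have : (8:ℕ) < n := by exact_mod_cast h8
    omega
  -- powers of two
  have h2L : (2:ℝ) ^ L = 1 / f := Real.rpow_logb (by norm_num) (by norm_num) hf'
  have h2n_lb : 1 / f ≤ (2:ℝ) ^ n := by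
    calc (1/f : ℝ) = 2 ^ L := h2L.symm
    _ ≤ (2:ℝ) ^ (n:ℝ) := Real.rpow_le_rpow_of_exponent_le (by norm_num) hLn
    _ = (2:ℝ) ^ n := by rw [Real.rpow_natCast]
  have h2n_ub : f * (2:ℝ) ^ n < 2 := by
    have : ((2:ℝ) ^ n : ℝ) < 2 / f := by
      calc ((2:ℝ) ^ n : ℝ) = (2:ℝ) ^ (n:ℝ) := by rw [Real.rpow_natCast]
      _ < (2:ℝ) ^ (L + 1) := Real.rpow_lt_rpow_of_exponent_lt (by norm_num) hnL
      _ = 2 / f := by rw [Real.rpow_add (by norm_num), h2L]; ring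
    calc f * (2:ℝ)^n < f * (2/f) := by
          exact (mul_lt_mul_iff_right₀ h0).mpr this
      _ = 2 := by field_simp
  have h2n_ge1 : 1 ≤ f * (2:ℝ) ^ n := by
    rw [div_le_iff₀ h0] at h2n_lb; linarith
  have hPle : ((1:ℝ)/2) ^ n ≤ f := by
    have hmul : ((1:ℝ)/2) ^ n * (2:ℝ) ^ n = 1 := by
      rw [← mul_pow]; norm_num
    have h2pos : (0:ℝ) < (2:ℝ)^n := by positivity
    have hPpos : (0:ℝ) < ((1:ℝ)/2)^n := by positivity
    nlinarith [mul_le_mul_of_nonneg_left h2n_ge1 hPpos.le]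
  have hPpos : (0:ℝ) < ((1:ℝ)/2)^n := by positivity
  -- key induction bounds for b
  have hA : ∀ k : ℕ, c * 2 ^ k ≤ 2 → b k ≤ 1 ∧ 1 - c * ((2:ℝ) ^ k - 1) ≤ b k := by
    intro k
    induction k with
    | zero => intro _; simp [hb0]
    | succ k ih =>
      intro hk
      have hck : c * (2:ℝ) ^ k ≤ 1 := by
        have : (2:ℝ) ^ (k+1) = 2 * 2^k := by ring
        rw [this] at hk; linarith
      obtain ⟨ih1, ih2⟩ := ih (by linarith)
      have hpk : (1:ℝ) ≤ (2:ℝ)^k := one_le_pow₀ (by norm_num)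
      have hfac : (0:ℝ) ≤ 1 - c * 2^k := by linarith
      have hbk0 : (0:ℝ) ≤ b k := by nlinarith
      rw [hbrec k]
      constructor
      · nlinarith
      · have key := mul_le_mul_of_nonneg_left ih2 hfac
        have : (2:ℝ)^(k+1) = 2 * 2^k := by ring
        rw [this]
        nlinarith [mul_nonneg (mul_nonneg hc0 hc0) (mul_nonneg (by positivity : (0:ℝ) ≤ (2:ℝ)^k) (by linarith : (0:ℝ) ≤ (2:ℝ)^k - 1))]
  have hA' : ∀ k ∈ Finset.range n, b k ≤ 1 ∧ 1 - c * ((2:ℝ) ^ k - 1) ≤ b k := by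
    intro k hk
    apply hA
    have hk' : k ≤ n - 1 := by
      simp only [Finset.mem_range] at hk; omega
    have hpow : (2:ℝ) ^ k ≤ (2:ℝ) ^ (n-1) := by
      exact pow_le_pow_right₀ (by norm_num) hk'
    have h2n1 : (2:ℝ) ^ (n-1) * 2 = 2 ^ n := by
      rw [← pow_succ]; congr 1; omega
    have hc2 : c * 2 ^ (n-1) * 2 ≤ f * 2^n := by
      rw [← h2n1]
      have := mul_le_mul_of_nonneg_left hcf (le_of_lt (show (0:ℝ) < 2^(n-1)*2 by positivity))
      nlinarith [pow_pos (show (0:ℝ)<2 by norm_num) (n-1)]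
    nlinarith [pow_pos (show (0:ℝ)<2 by norm_num) (n-1), mul_le_mul_of_nonneg_left hpow hc0]
  -- geometric sums
  have geomIcc : ∀ m : ℕ, ∑ k ∈ Finset.Icc 1 m, (2:ℝ)^k = 2^(m+1) - 2 := by
    intro m
    induction m with
    | zero => simp
    | succ m ih => rw [Finset.sum_Icc_succ_top (by omega), ih]; ring
  have halfGeom : ∀ m : ℕ, ∑ k ∈ Finset.range m, ((1:ℝ)/2)^(k+1) = 1 - (1/2)^m := by
    intro m
    induction m with
    | zero => simp
    | succ m ih => rw [Finset.sum_range_succ, ih]; ring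
  -- ALG bound
  have hALG : ALG ≤ 1 + 3*f - f*L := by
    have hSlb : ∑ k ∈ Finset.Icc 1 (n-1), (1 - c * ((2:ℝ)^k - 1)) ≤ ∑ k ∈ Finset.Icc 1 (n-1), b k := by
      apply Finset.sum_le_sum
      intro k hk
      refine (hA' k ?_).2
      simp only [Finset.mem_Icc] at hk
      simp only [Finset.mem_range]; omega
    have hsum : ∑ k ∈ Finset.Icc 1 (n-1), (1 - c * ((2:ℝ)^k - 1)) = ((n:ℝ)-1)*(1+c) - c*(2^n - 2) := by
      have h1' : ∑ k ∈ Finset.Icc 1 (n-1), (1 - c * ((2:ℝ)^k - 1))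
          = ∑ k ∈ Finset.Icc 1 (n-1), ((1+c) - c * (2:ℝ)^k) := by
        apply Finset.sum_congr rfl; intros; ring
      rw [h1', Finset.sum_sub_distrib, Finset.sum_const, ← Finset.mul_sum, Nat.card_Icc]
      have hgeq : n - 1 + 1 - 1 = n - 1 := by omega
      rw [hgeq]
      have hg := geomIcc (n-1)
      have : n - 1 + 1 = n := by omega
      rw [this] at hg
      rw [hg, nsmul_eq_mul, Nat.cast_sub hn9]
      push_cast
      ring
    have hkey : L - 3 ≤ ((n:ℝ)-1)*(1+c) - c*(2^n - 2) := by
      have h2npos : (0:ℝ) < 2^n := by positivity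
      nlinarith [mul_le_mul_of_nonneg_right hcf h2npos.le, mul_nonneg hc0 (by linarith : (0:ℝ) ≤ (n:ℝ)-1)]
    have hS : L - 3 ≤ ∑ k ∈ Finset.Icc 1 (n-1), b k := by
      rw [hsum] at hSlb; linarith
    have := mul_le_mul_of_nonneg_left hS h0.le
    show 1 - f * ∑ k ∈ Finset.Icc 1 (n - 1), b k ≤ 1 + 3 * f - f * L
    nlinarith
  -- OPT bound
  have hOPTlb : (1+c)*(1-((1:ℝ)/2)^n) - c/2*n ≤ OPT := by
    have hlb : ∑ k ∈ Finset.range n, ((1:ℝ)/2)^(k+1) * (1 - c * ((2:ℝ)^k - 1)) ≤ OPT := by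
      apply Finset.sum_le_sum
      intro k hk
      exact mul_le_mul_of_nonneg_left (hA' k hk).2 (by positivity)
    have hsum : ∑ k ∈ Finset.range n, ((1:ℝ)/2)^(k+1) * (1 - c * ((2:ℝ)^k - 1))
        = (1+c)*(1-((1:ℝ)/2)^n) - c/2*n := by
      have h1' : ∀ k : ℕ, ((1:ℝ)/2)^(k+1) * (1 - c * ((2:ℝ)^k - 1))
          = (1+c) * ((1:ℝ)/2)^(k+1) - c/2 := by
        intro k
        have hh : ((1:ℝ)/2)^(k+1) * (2:ℝ)^k = 1/2 := by
          rw [pow_succ, mul_comm (((1:ℝ)/2)^k) (1/2), mul_assoc, ← mul_pow]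
          norm_num
        nlinarith [hh]
      rw [Finset.sum_congr rfl (fun k _ => h1' k), Finset.sum_sub_distrib,
        ← Finset.mul_sum, halfGeom n, Finset.sum_const, Finset.card_range, nsmul_eq_mul]
      ring
    rw [← hsum]; exact hlb
  have hOPT : 1 - f - (1/2)*f*L ≤ OPT := by
    have hcn : c * (n:ℝ) ≤ f * (n:ℝ) := mul_le_mul_of_nonneg_right hcf (by positivity)
    nlinarith [mul_le_mul_of_nonneg_left (show (n:ℝ) - 1 ≤ L by linarith) (by linarith : (0:ℝ) ≤ f/2),
      mul_le_mul_of_nonneg_left hPle (by linarith : (0:ℝ) ≤ 1 + c), hPpos]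
  refine ⟨hALG, hOPT, ?_⟩
  -- part 3
  have hlog : Real.logb 2 (1 / (256 * f)) = L - 8 := by
    rw [hL, show (1/(256*f):ℝ) = (1/f)/256 by field_simp,
      Real.logb_div (by positivity) (by norm_num),
      show Real.logb 2 256 = 8 by rw [show (256:ℝ) = 2^(8:ℕ) by norm_num, Real.logb_pow]; simp]
  rw [hlog]
  -- f*L ≤ 1/2
  have hfL : f * L ≤ 1/2 := by
    have hs := Real.log_sqrt hf'.le
    have hs2 := Real.log_le_sub_one_of_pos (Real.sqrt_pos.mpr hf')
    have hlog1f : Real.log (1/f) ≤ 2 * Real.sqrt (1/f) := by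
      nlinarith [Real.sqrt_nonneg (1/f)]
    have hfs : f * Real.sqrt (1/f) = Real.sqrt f := by
      rw [one_div, Real.sqrt_inv, ← div_eq_mul_inv, Real.div_sqrt]
    have hsf : Real.sqrt f ≤ 1/16 := by
      have h := Real.sqrt_le_sqrt h1.le
      rwa [show (1/256:ℝ) = (1/16)^2 by norm_num, Real.sqrt_sq (by norm_num)] at h
    have hLdef : L = Real.log (1/f) / Real.log 2 := by rw [hL, Real.logb]
    have hlog2 : (0.6931471803:ℝ) < Real.log 2 := Real.log_two_gt_d9
    have hflog : f * Real.log (1/f) ≤ 1/8 := by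
      nlinarith [mul_le_mul_of_nonneg_left hlog1f h0.le]
    rw [hLdef, ← mul_div_assoc, div_le_iff₀ (by linarith)]
    nlinarith
  have hB : (0:ℝ) < 1 - f - (1/2)*f*L := by nlinarith
  have hF : (0:ℝ) < 1 - 1/2*f*(L-8) := by nlinarith
  have h3 : 1 + 3*f - f*L < (1 - 1/2*f*(L-8)) * (1 - f - (1/2)*f*L) := by
    nlinarith [mul_pos (mul_pos (mul_pos h0 h0) (by linarith : (0:ℝ) < L - 8)) (by linarith : (0:ℝ) < L + 2)]
  calc ALG ≤ 1 + 3*f - f*L := hALG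
    _ < (1 - 1/2*f*(L-8)) * (1 - f - (1/2)*f*L) := h3
    _ ≤ (1 - 1/2*f*(L-8)) * OPT := mul_le_mul_of_nonneg_left hOPT hF.le
end

section
/- Let f ∈ [1/3, 1), c = f/(1+f), a = f(1 - sqrt(f(2-f)))²/((1+f)(1-f)²), and θ = (1+f)(sqrt(f(2-f))+1)/((1+f)·sqrt(f(2-f)) + 3f + 1). Define y(t) = (t-c)²/(1-c) - a for t ∈ [y(1), 1] and y(t) = sqrt((1+f)/(t+a))·((t-c)² - c·(sqrt(t+a) - sqrt(c+a))²) for t ∈ [c, y(1)], where y(1) = 2 - 1/θ. Then y(c) = 0, and the two branches agree at t = y(1). -/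
/-- For f ∈ [1/3, 1), with c = f/(1+f),
a = f(1-√(f(2-f)))²/((1+f)(1-f)²), θ = (1+f)(√(f(2-f))+1)/((1+f)√(f(2-f))+3f+1) and
y(1) = 2 - 1/θ, the two-branch function
y(t) = (t-c)²/(1-c) - a on [y(1), 1] and
y(t) = √((1+f)/(t+a))·((t-c)² - c(√(t+a) - √(c+a))²) on [c, y(1)]
satisfies y(c) = 0 and the branches agree at t = y(1). -/
theorem closed_form_solution_middle_f (f : ℝ) (h1 : 1 / 3 ≤ f) (h2 : f < 1) :
    let c : ℝ := f / (1 + f)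
    let a : ℝ := f * (1 - Real.sqrt (f * (2 - f))) ^ 2 / ((1 + f) * (1 - f) ^ 2)
    let θ : ℝ := (1 + f) * (Real.sqrt (f * (2 - f)) + 1)
      / ((1 + f) * Real.sqrt (f * (2 - f)) + 3 * f + 1)
    let y1 : ℝ := 2 - 1 / θ
    let y : ℝ → ℝ := fun t =>
      if y1 ≤ t then (t - c) ^ 2 / (1 - c) - a
      else Real.sqrt ((1 + f) / (t + a))
        * ((t - c) ^ 2 - c * (Real.sqrt (t + a) - Real.sqrt (c + a)) ^ 2)
    y c = 0 ∧
    (y1 - c) ^ 2 / (1 - c) - a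
      = Real.sqrt ((1 + f) / (y1 + a))
        * ((y1 - c) ^ 2 - c * (Real.sqrt (y1 + a) - Real.sqrt (c + a)) ^ 2) := by
  intro c a θ y1 y
  have hf0 : (0:ℝ) < f := by linarith
  have h1f : (0:ℝ) < 1 + f := by linarith
  have h1mf : (0:ℝ) < 1 - f := by linarith
  set s : ℝ := Real.sqrt (f * (2 - f)) with hsdef
  have hprod : (0:ℝ) ≤ f * (2 - f) := by nlinarith
  have hs0 : 0 ≤ s := Real.sqrt_nonneg _
  have hs2 : s ^ 2 = f * (2 - f) := Real.sq_sqrt hprod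
  have hfs : f < s := by nlinarith [hs2, hs0]
  have h1s : (0:ℝ) < 1 + s := by linarith
  have hc : c = f / (1 + f) := rfl
  have ha : a = f * (1 - s) ^ 2 / ((1 + f) * (1 - f) ^ 2) := rfl
  have hy1def : y1 = 2 - 1 / θ := rfl
  have hθ : θ = (1 + f) * (s + 1) / ((1 + f) * s + 3 * f + 1) := rfl
  have hden : (0:ℝ) < (1 + f) * s + 3 * f + 1 := by nlinarith
  have ha' : a = f * (1 - s) / ((1 + f) * (1 + s)) := by
    rw [ha]
    field_simp
    linear_combination (s - 1) * hs2
  have hy1' : y1 = ((1 + f) * s + 1 - f) / ((1 + f) * (1 + s)) := by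
    rw [hy1def, hθ]
    rw [one_div_div]
    field_simp
    ring
  have hy1a : y1 + a = 1 / (1 + f) := by
    rw [hy1', ha']; field_simp; ring
  have hca : c + a = 2 * f / ((1 + f) * (1 + s)) := by
    rw [hc, ha']; field_simp; ring
  have hy1c : y1 - c = (s + 1 - 2 * f) / ((1 + f) * (1 + s)) := by
    rw [hy1', hc]; field_simp; ring
  have hc1 : 1 - c = 1 / (1 + f) := by rw [hc]; field_simp; ring
  have hcy1 : c < y1 := by
    have h0 : (0:ℝ) < y1 - c := by
      rw [hy1c]; exact div_pos (by linarith) (by positivity)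
    linarith
  constructor
  · show (if y1 ≤ c then (c - c) ^ 2 / (1 - c) - a
      else Real.sqrt ((1 + f) / (c + a))
        * ((c - c) ^ 2 - c * (Real.sqrt (c + a) - Real.sqrt (c + a)) ^ 2)) = 0
    rw [if_neg (not_le.mpr hcy1)]
    simp
  · -- branches agree at y1
    have hA : Real.sqrt ((1 + f) / (y1 + a)) = 1 + f := by
      rw [hy1a]
      rw [show (1 + f) / (1 / (1 + f)) = (1 + f) ^ 2 by field_simp]
      exact Real.sqrt_sq h1f.le
    have hy1a0 : (0:ℝ) ≤ y1 + a := by rw [hy1a]; positivity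
    have hca0 : (0:ℝ) ≤ c + a := by rw [hca]; positivity
    have hABsq : (y1 + a) * (c + a) = ((f + s) / ((1 + f) * (1 + s))) ^ 2 := by
      rw [hy1a, hca]
      have key : (f + s) ^ 2 = 2 * f * (1 + s) := by linear_combination hs2
      field_simp
      linear_combination (-1) * key
    have hAB : Real.sqrt (y1 + a) * Real.sqrt (c + a) = (f + s) / ((1 + f) * (1 + s)) := by
      rw [← Real.sqrt_mul hy1a0, hABsq]
      exact Real.sqrt_sq (by positivity)
    have hsq : (Real.sqrt (y1 + a) - Real.sqrt (c + a)) ^ 2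
        = (y1 + a) + (c + a) - 2 * ((f + s) / ((1 + f) * (1 + s))) := by
      rw [sub_sq, Real.sq_sqrt hy1a0, Real.sq_sqrt hca0, mul_assoc, hAB]
      ring
    rw [hA, hsq, hy1c, hy1a, hca, hc1, ha', hc]
    field_simp
    ring
end
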